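/- Let k ≥ 1, M ∈ ℕ, d ≥ 1, and let S_1, …, S_k be sets of vectors in {−M, …, M}^d ⊆ ℤ^d, with associated set cover instance J. If there are no x_1 ∈ S_1, …, x_k ∈ S_k with x_1 + ⋯ + x_k = 0, then every subset X of the disjoint union of S_1, …, S_k with |X| ≤ k fails to cover the universe of J; that is, every cover of the universe of J has cardinality greater than k. -/
import Mathlib


/-- `D = {(d_1, …, d_k) ∈ {−M, …, M}^k : d_1 + ⋯ + d_k = 0}`. -/
def VecD (k M : ℕ) : Type :=
  {a : Fin k → ℤ // (∀ i, |a i| ≤ (M : ℤ)) ∧ ∑ i, a i = 0}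

/-- The adjacency relation of the set cover instance `J` associated with sets
`S_1, …, S_k` of vectors in `{−M, …, M}^d ⊆ ℤ^d`: the left side is the disjoint union
`Σ i, {x // x ∈ Sfam i}`, the universe is `[d] × ([k]^D)`, and `x ∈ S_i` is adjacent to
`(j, u)` iff there exists `a ∈ D` with `u a = i` and `x j = a i`. -/
def vecAdj {k M d : ℕ} (Sfam : Fin k → Finset (Fin d → ℤ))
    (s : Σ i : Fin k, {x : Fin d → ℤ // x ∈ Sfam i})
    (u : Fin d × (VecD k M → Fin k)) : Prop :=
  ∃ a : VecD k M, u.2 a = s.1 ∧ s.2.val u.1 = a.val s.1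

/-- Let `k ≥ 1`, `M ∈ ℕ`, `d ≥ 1`, and let `S_1, …, S_k` be sets of vectors
in `{−M, …, M}^d ⊆ ℤ^d`, with associated set cover instance `J`.  If there are no
`x_1 ∈ S_1, …, x_k ∈ S_k` with `x_1 + ⋯ + x_k = 0`, then every cover of the universe of
`J` has cardinality greater than `k`. -/
theorem vecsum_soundness (k M d : ℕ) (hk : 1 ≤ k) (hd : 1 ≤ d)
    (Sfam : Fin k → Finset (Fin d → ℤ))
    (hbound : ∀ i : Fin k, ∀ x ∈ Sfam i, ∀ j : Fin d, |x j| ≤ (M : ℤ))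
    (hno : ¬ ∃ x : Fin k → (Fin d → ℤ), (∀ i, x i ∈ Sfam i) ∧ ∑ i, x i = 0) :
    ∀ X : Finset (Σ i : Fin k, {x : Fin d → ℤ // x ∈ Sfam i}),
      (∀ u : Fin d × (VecD k M → Fin k), ∃ s ∈ X, vecAdj Sfam s u) →
      k < X.card := by
  intro X hcov
  by_contra hle
  push_neg at hle
  -- every index i is hit by X
  have hsurj : ∀ i : Fin k, ∃ s ∈ X, s.1 = i := by
    intro i
    obtain ⟨s, hs, a, ha1, _⟩ := hcov (⟨0, hd⟩, fun _ => i)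
    exact ⟨s, hs, ha1.symm⟩
  choose f hfX hf1 using hsurj
  have hfinj : Function.Injective f := fun i j h => by rw [← hf1 i, ← hf1 j, h]
  have himg : Finset.image f Finset.univ = X := by
    apply Finset.eq_of_subset_of_card_le
    · intro s hs
      obtain ⟨i, _, rfl⟩ := Finset.mem_image.mp hs
      exact hfX i
    · rw [Finset.card_image_of_injective _ hfinj, Finset.card_univ, Fintype.card_fin]
      exact hle
  have hmem : ∀ s ∈ X, s = f s.1 := by
    intro s hs
    rw [← himg] at hs
    obtain ⟨i, _, rfl⟩ := Finset.mem_image.mp hs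
    rw [hf1]
  set x : Fin k → (Fin d → ℤ) := fun i => (f i).2.val with hx
  have hxmem : ∀ i, x i ∈ Sfam i := by
    intro i
    have h := congrArg Sfam (hf1 i)
    rw [← h]
    exact (f i).2.property
  have hsum : ∑ i, x i ≠ 0 := fun h => hno ⟨x, hxmem, h⟩
  have hjex : ∃ j : Fin d, ∑ i, x i j ≠ 0 := by
    by_contra h
    push_neg at h
    apply hsum
    funext j
    simpa [Finset.sum_apply] using h j
  obtain ⟨j, hj⟩ := hjex
  have hex : ∀ a : VecD k M, ∃ i, a.val i ≠ x i j := by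
    intro a
    by_contra h
    push_neg at h
    apply hj
    rw [← a.property.2]
    exact Finset.sum_congr rfl (fun i _ => (h i).symm)
  choose u hu using hex
  obtain ⟨s, hs, a, ha1, ha2⟩ := hcov (j, u)
  have hse := hmem s hs
  have h2 : s.2.val j = x s.1 j := congrArg (fun t : Σ i, {x : Fin d → ℤ // x ∈ Sfam i} => t.2.val j) hse
  have h3 : a.val s.1 = x s.1 j := ha2.symm.trans h2
  rw [← ha1] at h3
  exact hu a h3
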